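/- Let ε > 0, λ > 0, μ > 0, and let f : [0,∞) × [0,∞) → [0,∞) be continuous, C¹ in t, with f(·,t), v f(·,t), v² f(·,t) integrable on (0,∞) for every t, with ∫₀^∞ f(v,t) dv = 1 and ∫₀^∞ v f(v,t) dv = μ for all t ≥ 0, and such that t ↦ ∫₀^∞ v² f(v,t) dv can be differentiated under the integral sign. If f satisfies the ε-BDY equation pointwise, then for all t ≥ 0: d/dt ∫₀^∞ v² f(v,t) dv = λ ε² r[f](t) + λ ε ( μ r[f](t) − r₁[f](t) ), where r[f](t) = ∫_ε^∞ f(v,t) dv and r₁[f](t) = ∫_ε^∞ v f(v,t) dv. -/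

import Mathlib

open MeasureTheory Set Filter

lemma shift_integral (g : ℝ → ℝ) (a c : ℝ) :
    ∫ v in Ioi c, g (v + a) = ∫ v in Ioi (c + a), g v := by
  have h := (measurePreserving_add_right (volume : Measure ℝ) a).setIntegral_preimage_emb
    (MeasurableEquiv.addRight a).measurableEmbedding g (Ioi (c + a))
  have hpre : (fun x : ℝ => x + a) ⁻¹' Ioi (c + a) = Ioi c := by
    ext x; simp [mem_Ioi]
  simpa [hpre] using h

lemma shift_integrableOn {g : ℝ → ℝ} (a c : ℝ) (h : IntegrableOn g (Ioi (c + a))) :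
    IntegrableOn (fun v => g (v + a)) (Ioi c) := by
  have h2 := ((measurePreserving_add_right (volume : Measure ℝ) a).integrableOn_comp_preimage
    (MeasurableEquiv.addRight a).measurableEmbedding (f := g) (s := Ioi (c + a))).mpr h
  have hpre : (fun x : ℝ => x + a) ⁻¹' Ioi (c + a) = Ioi c := by
    ext x; simp [mem_Ioi]
  rw [hpre] at h2
  exact h2

/-- **Evolution of the second moment for the ε-BDY equation.**
If `f` is a nonnegative classical (C¹-in-time) solution of the ε-BDY equation which is,
for every time, a probability density with mean `μ`, whose moments up to order two are
finite, and if `t ↦ ∫₀^∞ v² f(v,t) dv` may be differentiated under the integral sign, then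
`d/dt ∫₀^∞ v² f(v,t) dv = λ ε² r[f](t) + λ ε ( μ r[f](t) − r₁[f](t) )` for all `t ≥ 0`,
where `r[f](t) = ∫_ε^∞ f(v,t) dv` and `r₁[f](t) = ∫_ε^∞ v f(v,t) dv`. -/
theorem epsilon_BDY_second_moment
    (ε lam μ : ℝ) (hε : 0 < ε) (hlam : 0 < lam) (hμ : 0 < μ)
    (f ft : ℝ → ℝ → ℝ)
    (hcont : ContinuousOn (fun p : ℝ × ℝ => f p.1 p.2) (Ici 0 ×ˢ Ici 0))
    (hnonneg : ∀ v t : ℝ, 0 ≤ v → 0 ≤ t → 0 ≤ f v t)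
    (hderiv_t : ∀ v t : ℝ, 0 ≤ v → 0 ≤ t → HasDerivAt (fun s => f v s) (ft v t) t)
    (hint : ∀ t : ℝ, 0 ≤ t → IntegrableOn (fun v => f v t) (Ioi 0))
    (hint1 : ∀ t : ℝ, 0 ≤ t → IntegrableOn (fun v => v * f v t) (Ioi 0))
    (hint2 : ∀ t : ℝ, 0 ≤ t → IntegrableOn (fun v => v ^ 2 * f v t) (Ioi 0))
    (hmass : ∀ t : ℝ, 0 ≤ t → ∫ v in Ioi (0:ℝ), f v t = 1)
    (hmean : ∀ t : ℝ, 0 ≤ t → ∫ v in Ioi (0:ℝ), v * f v t = μ)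
    (hDUI : ∀ t : ℝ, 0 ≤ t →
      HasDerivAt (fun s => ∫ v in Ioi (0:ℝ), v ^ 2 * f v s)
        (∫ v in Ioi (0:ℝ), v ^ 2 * ft v t) t)
    (hPDE : ∀ v t : ℝ, 0 ≤ v → 0 ≤ t →
      ft v t = lam / 2 *
        (f (v + ε) t - (∫ w in Ioi ε, f w t) * f v t +
          ((∫ w in Ioi ε, f w t) * f (v - ε) t - f v t) * (if ε ≤ v then 1 else 0))) :
    ∀ t : ℝ, 0 ≤ t →
      deriv (fun s => ∫ v in Ioi (0:ℝ), v ^ 2 * f v s) t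
        = lam * ε ^ 2 * (∫ w in Ioi ε, f w t)
          + lam * ε * (μ * (∫ w in Ioi ε, f w t) - ∫ w in Ioi ε, w * f w t) := by
  intro t ht
  set r : ℝ := ∫ w in Ioi ε, f w t with hr
  set r1 : ℝ := ∫ w in Ioi ε, w * f w t with hr1
  have hsub : Ioi ε ⊆ Ioi (0:ℝ) := Ioi_subset_Ioi hε.le
  have h0 := hint t ht
  have h1 := hint1 t ht
  have h2 := hint2 t ht
  -- integrability of (w-ε)^2 f on Ioi ε
  have hGε : IntegrableOn (fun w => (w - ε) ^ 2 * f w t) (Ioi ε) := by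
    have heq : (fun w => (w - ε) ^ 2 * f w t)
        = fun w => (w ^ 2 * f w t - (2 * ε) * (w * f w t)) + ε ^ 2 * f w t := by
      funext w; ring
    rw [heq]
    exact ((h2.mono_set hsub).sub ((h1.mono_set hsub).const_mul _)).add
      ((h0.mono_set hsub).const_mul _)
  -- integrability of (w+ε)^2 f on Ioi 0
  have hG' : IntegrableOn (fun w => (w + ε) ^ 2 * f w t) (Ioi 0) := by
    have heq : (fun w => (w + ε) ^ 2 * f w t)
        = fun w => (w ^ 2 * f w t + (2 * ε) * (w * f w t)) + ε ^ 2 * f w t := by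
      funext w; ring
    rw [heq]
    exact (h2.add (h1.const_mul _)).add (h0.const_mul _)
  -- integrability of v^2 f(v+ε) on Ioi 0
  have hA : IntegrableOn (fun v => v ^ 2 * f (v + ε) t) (Ioi 0) := by
    have := shift_integrableOn (g := fun w => (w - ε) ^ 2 * f w t) ε 0 (by simpa using hGε)
    simpa using this
  -- integrability of v^2 f(v-ε) on Ioi ε
  have hB : IntegrableOn (fun v => v ^ 2 * f (v - ε) t) (Ioi ε) := by
    have := shift_integrableOn (g := fun w => (w + ε) ^ 2 * f w t) (-ε) ε (by simpa using hG')
    simpa [sub_eq_add_neg] using this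
  have hB' : IntegrableOn (fun v => v ^ 2 * f (v - ε) t) (Ici ε) :=
    Iff.mpr integrableOn_Ici_iff_integrableOn_Ioi hB
  -- the indicator piece
  set hfun : ℝ → ℝ := fun v => (lam / 2 * r) * (v ^ 2 * f (v - ε) t)
      - (lam / 2) * (v ^ 2 * f v t) with hhfun
  have hCset : IntegrableOn hfun (Ici ε) := by
    have ha : IntegrableOn (fun v => (lam / 2 * r) * (v ^ 2 * f (v - ε) t)) (Ici ε) :=
      hB'.const_mul _
    have hb : IntegrableOn (fun v => (lam / 2) * (v ^ 2 * f v t)) (Ici ε) :=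
      Iff.mpr integrableOn_Ici_iff_integrableOn_Ioi ((h2.mono_set hsub).const_mul _)
    exact ha.sub hb
  have hC : Integrable ((Ici ε).indicator hfun) (volume.restrict (Ioi 0)) :=
    (hCset.integrable_indicator measurableSet_Ici).integrableOn
  -- rewrite integrand via the PDE
  have key : ∫ v in Ioi (0:ℝ), v ^ 2 * ft v t
      = ∫ v in Ioi (0:ℝ),
          ((lam / 2) * (v ^ 2 * f (v + ε) t) - (lam / 2 * r) * (v ^ 2 * f v t)
            + (Ici ε).indicator hfun v) := by
    apply setIntegral_congr_fun measurableSet_Ioi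
    intro v hv
    dsimp only
    rw [hPDE v t (le_of_lt hv) ht, ← hr]
    by_cases h : ε ≤ v
    · simp only [indicator, mem_Ici, h, if_true, hhfun]; ring
    · simp only [indicator, mem_Ici, h, if_false, hhfun]; ring
  -- shift identities
  have e1 : ∫ v in Ioi (0:ℝ), v ^ 2 * f (v + ε) t = ∫ w in Ioi ε, (w - ε) ^ 2 * f w t := by
    have := shift_integral (fun w => (w - ε) ^ 2 * f w t) ε 0
    simpa using this
  have e2 : ∫ v in Ioi ε, v ^ 2 * f (v - ε) t = ∫ w in Ioi (0:ℝ), (w + ε) ^ 2 * f w t := by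
    have := shift_integral (fun w => (w + ε) ^ 2 * f w t) (-ε) ε
    simpa [sub_eq_add_neg] using this
  -- expand the shifted integrals
  have e1' : ∫ w in Ioi ε, (w - ε) ^ 2 * f w t
      = (∫ w in Ioi ε, w ^ 2 * f w t) - 2 * ε * r1 + ε ^ 2 * r := by
    have heq : ∀ w ∈ Ioi ε, (w - ε) ^ 2 * f w t
        = (w ^ 2 * f w t - (2 * ε) * (w * f w t)) + ε ^ 2 * f w t := by
      intro w _; ring
    have i2 : IntegrableOn (fun w => w ^ 2 * f w t) (Ioi ε) := h2.mono_set hsub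
    have i1 : IntegrableOn (fun w => (2 * ε) * (w * f w t)) (Ioi ε) :=
      (h1.mono_set hsub).const_mul _
    have i0 : IntegrableOn (fun w => ε ^ 2 * f w t) (Ioi ε) :=
      (h0.mono_set hsub).const_mul _
    have i21 : IntegrableOn (fun w => w ^ 2 * f w t - (2 * ε) * (w * f w t)) (Ioi ε) :=
      i2.sub i1
    rw [setIntegral_congr_fun measurableSet_Ioi heq, integral_add i21 i0,
      integral_sub i2 i1, integral_const_mul, integral_const_mul, ← hr, ← hr1]
  have e2' : ∫ w in Ioi (0:ℝ), (w + ε) ^ 2 * f w t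
      = (∫ w in Ioi (0:ℝ), w ^ 2 * f w t) + 2 * ε * μ + ε ^ 2 := by
    have heq : ∀ w ∈ Ioi (0:ℝ), (w + ε) ^ 2 * f w t
        = (w ^ 2 * f w t + (2 * ε) * (w * f w t)) + ε ^ 2 * f w t := by
      intro w _; ring
    have i1 : IntegrableOn (fun w => (2 * ε) * (w * f w t)) (Ioi (0:ℝ)) := h1.const_mul _
    have i0 : IntegrableOn (fun w => ε ^ 2 * f w t) (Ioi (0:ℝ)) := h0.const_mul _
    have i21 : IntegrableOn (fun w => w ^ 2 * f w t + (2 * ε) * (w * f w t)) (Ioi (0:ℝ)) :=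
      h2.add i1
    rw [setIntegral_congr_fun measurableSet_Ioi heq, integral_add i21 i0,
      integral_add h2 i1, integral_const_mul, integral_const_mul,
      hmass t ht, hmean t ht, mul_one]
  -- assemble
  have jA : IntegrableOn (fun v => (lam / 2) * (v ^ 2 * f (v + ε) t)) (Ioi (0:ℝ)) :=
    hA.const_mul _
  have jB : IntegrableOn (fun v => (lam / 2 * r) * (v ^ 2 * f v t)) (Ioi (0:ℝ)) :=
    h2.const_mul _
  have jAB : IntegrableOn
      (fun v => (lam / 2) * (v ^ 2 * f (v + ε) t) - (lam / 2 * r) * (v ^ 2 * f v t))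
      (Ioi (0:ℝ)) := jA.sub jB
  rw [(hDUI t ht).deriv, key, integral_add jAB hC, integral_sub jA jB,
    integral_const_mul, integral_const_mul]
  have hind : ∫ v in Ioi (0:ℝ), (Ici ε).indicator hfun v
      = (lam / 2 * r) * (∫ v in Ioi ε, v ^ 2 * f (v - ε) t)
        - (lam / 2) * (∫ v in Ioi ε, v ^ 2 * f v t) := by
    have hIs : Ioi (0:ℝ) ∩ Ici ε = Ici ε :=
      inter_eq_self_of_subset_right (fun x hx => lt_of_lt_of_le hε hx)
    rw [setIntegral_indicator measurableSet_Ici, hIs, integral_Ici_eq_integral_Ioi]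
    have ka : IntegrableOn (fun v => (lam / 2 * r) * (v ^ 2 * f (v - ε) t)) (Ioi ε) :=
      hB.const_mul _
    have kb : IntegrableOn (fun v => (lam / 2) * (v ^ 2 * f v t)) (Ioi ε) :=
      (h2.mono_set hsub).const_mul _
    rw [hhfun, integral_sub ka kb, integral_const_mul, integral_const_mul]
  rw [hind, e1, e1', e2, e2']
  ring
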